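/- A polynomial f ∈ ℂ[x₀,x₁,x₂,x₃] is invariant under all five substitutions h₀₀₀₁ : (x₀,x₁,x₂,x₃) ↦ (x₀,−x₁,x₂,−x₃), h₀₀₁₀ : (x₀,x₁,x₂,x₃) ↦ (x₀,x₁,−x₂,−x₃), h₀₁₀₀ : (x₀,x₁,x₂,x₃) ↦ (x₁,x₀,x₃,x₂), h₁₀₀₀ : (x₀,x₁,x₂,x₃) ↦ (x₂,x₃,x₀,x₁), and c : (x₀,x₁,x₂,x₃) ↦ (ix₀,ix₁,ix₂,ix₃) if and only if f lies in the ℂ-subalgebra generated by the five polynomials p₀ := x₀⁴+x₁⁴+x₂⁴+x₃⁴, p₁ := 2(x₀²x₁²+x₂²x₃²), p₂ := 2(x₀²x₂²+x₁²x₃²), p₃ := 2(x₀²x₃²+x₁²x₂²), p₄ := 4x₀x₁x₂x₃. In other words, the ring of invariants of the Heisenberg group acting via the Schrödinger representation equals ℂ[p₀,p₁,p₂,p₃,p₄]. -/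

import Mathlib

open MvPolynomial

/- A polynomial `f ∈ ℂ[x₀,x₁,x₂,x₃]` is invariant under the five substitutions
generating the (image of the) Heisenberg group iff it lies in the `ℂ`-subalgebra
generated by `p₀, p₁, p₂, p₃, p₄`. -/

/-- The substitution `h₀₀₀₁ : (x₀,x₁,x₂,x₃) ↦ (x₀,−x₁,x₂,−x₃)`. -/
noncomputable def h0001 : MvPolynomial (Fin 4) ℂ →ₐ[ℂ] MvPolynomial (Fin 4) ℂ :=
  aeval ![X 0, -X 1, X 2, -X 3]

/-- The substitution `h₀₀₁₀ : (x₀,x₁,x₂,x₃) ↦ (x₀,x₁,−x₂,−x₃)`. -/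
noncomputable def h0010 : MvPolynomial (Fin 4) ℂ →ₐ[ℂ] MvPolynomial (Fin 4) ℂ :=
  aeval ![X 0, X 1, -X 2, -X 3]

/-- The substitution `h₀₁₀₀ : (x₀,x₁,x₂,x₃) ↦ (x₁,x₀,x₃,x₂)`. -/
noncomputable def h0100 : MvPolynomial (Fin 4) ℂ →ₐ[ℂ] MvPolynomial (Fin 4) ℂ :=
  aeval ![X 1, X 0, X 3, X 2]

/-- The substitution `h₁₀₀₀ : (x₀,x₁,x₂,x₃) ↦ (x₂,x₃,x₀,x₁)`. -/
noncomputable def h1000 : MvPolynomial (Fin 4) ℂ →ₐ[ℂ] MvPolynomial (Fin 4) ℂ :=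
  aeval ![X 2, X 3, X 0, X 1]

/-- The substitution `c : (x₀,x₁,x₂,x₃) ↦ (ix₀,ix₁,ix₂,ix₃)`. -/
noncomputable def cmap : MvPolynomial (Fin 4) ℂ →ₐ[ℂ] MvPolynomial (Fin 4) ℂ :=
  aeval ![C Complex.I * X 0, C Complex.I * X 1, C Complex.I * X 2, C Complex.I * X 3]

/-- `p₀ := x₀⁴+x₁⁴+x₂⁴+x₃⁴`. -/
noncomputable def p0 : MvPolynomial (Fin 4) ℂ := X 0 ^ 4 + X 1 ^ 4 + X 2 ^ 4 + X 3 ^ 4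

/-- `p₁ := 2(x₀²x₁²+x₂²x₃²)`. -/
noncomputable def p1 : MvPolynomial (Fin 4) ℂ := 2 * (X 0 ^ 2 * X 1 ^ 2 + X 2 ^ 2 * X 3 ^ 2)

/-- `p₂ := 2(x₀²x₂²+x₁²x₃²)`. -/
noncomputable def p2 : MvPolynomial (Fin 4) ℂ := 2 * (X 0 ^ 2 * X 2 ^ 2 + X 1 ^ 2 * X 3 ^ 2)

/-- `p₃ := 2(x₀²x₃²+x₁²x₂²)`. -/
noncomputable def p3 : MvPolynomial (Fin 4) ℂ := 2 * (X 0 ^ 2 * X 3 ^ 2 + X 1 ^ 2 * X 2 ^ 2)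

/-- `p₄ := 4x₀x₁x₂x₃`. -/
noncomputable def p4 : MvPolynomial (Fin 4) ℂ := 4 * (X 0 * X 1 * X 2 * X 3)

noncomputable section HeisAux

abbrev R4 := MvPolynomial (Fin 4) ℂ
abbrev E4 := Fin 4 →₀ ℕ

/-- diagonal substitution -/
noncomputable def dE (e : Fin 4 → ℂ) : R4 →ₐ[ℂ] R4 := aeval fun i => C (e i) * X i

lemma dE_monomial (e : Fin 4 → ℂ) (a : E4) (c : ℂ) :
    dE e (monomial a c) = monomial a ((∏ i, e i ^ a i) * c) := by
  rw [dE, aeval_monomial, monomial_eq,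
    Finsupp.prod_fintype _ _ (fun i => pow_zero _),
    Finsupp.prod_fintype _ _ (fun i => pow_zero _)]
  simp only [mul_pow, ← C_pow, Finset.prod_mul_distrib, ← map_prod, algebraMap_eq, map_mul]
  ring

lemma coeff_sum_mono_reindex (s : Finset E4) (F ρ : E4 → E4)
    (hs : ∀ a ∈ s, ρ (F a) = a) (hρ : ∀ b, F (ρ b) = b) (c : E4 → ℂ) (b : E4) :
    coeff b (∑ a ∈ s, monomial (F a) (c a)) = if ρ b ∈ s then c (ρ b) else 0 := by
  classical
  rw [MvPolynomial.coeff_sum]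
  simp only [coeff_monomial]
  by_cases h : ρ b ∈ s
  · rw [Finset.sum_eq_single (ρ b)]
    · rw [if_pos (hρ b), if_pos h]
    · intro a ha hne
      rw [if_neg]
      intro hFa
      exact hne (by rw [← hs a ha, hFa])
    · intro h'; exact absurd h h'
  · rw [if_neg h]
    apply Finset.sum_eq_zero
    intro a ha
    rw [if_neg]
    intro hFa
    have hab : ρ b = a := by rw [← hFa, hs a ha]
    exact h (by rw [hab]; exact ha)

lemma dE_coeff (e : Fin 4 → ℂ) (f : R4) (a : E4) :
    coeff a (dE e f) = (∏ i, e i ^ a i) * coeff a f := by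
  conv_lhs => rw [← support_sum_monomial_coeff f]
  rw [map_sum]
  simp only [dE_monomial]
  rw [show (∑ x ∈ f.support, monomial x ((∏ i, e i ^ x i) * coeff x f))
      = ∑ x ∈ f.support, monomial (id x) ((fun b => (∏ i, e i ^ b i) * coeff b f) x) from rfl,
    coeff_sum_mono_reindex f.support id id (fun _ _ => rfl) (fun _ => rfl)]
  split_ifs with h
  · rfl
  · rw [MvPolynomial.notMem_support_iff.mp (by exact h), mul_zero]


/-- exponent pullback along a variable map -/
def pa (π : Fin 4 → Fin 4) (b : E4) : E4 := Finsupp.equivFunOnFinite.symm (fun i => b (π i))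

@[simp] lemma pa_apply (π : Fin 4 → Fin 4) (b : E4) (i : Fin 4) : pa π b i = b (π i) := rfl

lemma mapDomain_pa (π : Fin 4 → Fin 4) (hπ : Function.Involutive π) (b : E4) :
    Finsupp.mapDomain π (pa π b) = b := by
  ext i
  rw [show π = ⇑(hπ.toPerm π) from rfl, Finsupp.mapDomain_equiv_apply]
  simp [Function.Involutive.toPerm, hπ i]

lemma coeff_rename_pa (π : Fin 4 → Fin 4) (hπ : Function.Involutive π) (h : R4) (b : E4) :
    coeff b (rename π h) = coeff (pa π b) h := by
  conv_lhs => rw [← mapDomain_pa π hπ b]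
  exact coeff_rename_mapDomain π hπ.injective h (pa π b)

lemma I_pow_eq_one {n : ℕ} (h : Complex.I ^ n = 1) : n % 4 = 0 := by
  have h4 : Complex.I ^ n = Complex.I ^ (n % 4) := by
    conv_lhs => rw [← Nat.div_add_mod n 4]
    rw [pow_add, pow_mul, Complex.I_pow_four, one_pow, one_mul]
  rw [h4] at h
  have hlt : n % 4 < 4 := Nat.mod_lt _ (by norm_num)
  interval_cases h' : n % 4 <;>
    simp_all [pow_succ, Complex.ext_iff, Complex.I_mul_I] <;> norm_num at h


lemma prod_neg_one_pow (u : Fin 4 → Bool) (a : E4) :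
    (∏ i, (if u i then (-1:ℂ) else 1) ^ a i) = (-1:ℂ) ^ (∑ i, if u i then a i else 0) := by
  rw [← Finset.prod_pow_eq_pow_sum]
  apply Finset.prod_congr rfl
  intro i _
  by_cases h : u i <;> simp [h]

/-- from invariance under dE with sign pattern u, get parity of masked degree sum -/
lemma parity_of_dE_inv (u : Fin 4 → Bool) (f : R4)
    (hf : dE (fun i => if u i then (-1:ℂ) else 1) f = f) :
    ∀ a ∈ f.support, Even (∑ i, if u i then a i else 0) := by
  intro a ha
  have hc := MvPolynomial.mem_support_iff.mp ha
  have h1 : (∏ i, (if u i then (-1:ℂ) else 1) ^ a i) * coeff a f = coeff a f := by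
    rw [← dE_coeff]; rw [hf]
  have h2 : (∏ i, (if u i then (-1:ℂ) else 1) ^ a i) = 1 := by
    have := mul_right_cancel₀ hc (h1.trans (one_mul (coeff a f)).symm)
    exact this
  rw [prod_neg_one_pow] at h2
  exact (neg_one_pow_eq_one_iff_even (by norm_num : (-1:ℂ) ≠ 1)).mp h2

/-- dichotomy of parity classes -/
lemma parity_dichotomy (a : E4) (h13 : Even (a 1 + a 3)) (h23 : Even (a 2 + a 3))
    (hS : Even (a 0 + a 1 + a 2 + a 3)) :
    (∀ i, Even (a i)) ∨ (∀ i, ¬ Even (a i)) := by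
  rw [Nat.even_add] at h13 h23
  rcases Nat.even_or_odd (a 0) with h0 | h0
  · left
    intro i
    fin_cases i <;> simp_all [Nat.even_iff, Nat.odd_iff, Nat.even_add] <;> omega
  · right
    intro i
    fin_cases i <;> simp_all [Nat.even_iff, Nat.odd_iff, Nat.even_add] <;> omega

/-- every polynomial whose monomials have all-even or all-odd exponents lies in the
subalgebra generated by squares and the product of all variables -/
lemma split_mem (h : R4)
    (hcl : ∀ a ∈ h.support, (∀ i, Even (a i)) ∨ (∀ i, ¬ Even (a i))) :
    h ∈ Algebra.adjoin ℂ ({X 0 ^ 2, X 1 ^ 2, X 2 ^ 2, X 3 ^ 2,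
        X 0 * X 1 * X 2 * X 3} : Set R4) := by
  have hX2 : ∀ i : Fin 4, (X i ^ 2 : R4) ∈ Algebra.adjoin ℂ ({X 0 ^ 2, X 1 ^ 2, X 2 ^ 2, X 3 ^ 2,
        X 0 * X 1 * X 2 * X 3} : Set R4) := by
    intro i
    apply Algebra.subset_adjoin
    simp only [Set.mem_insert_iff, Set.mem_singleton_iff]
    fin_cases i
    · exact Or.inl rfl
    · exact Or.inr (Or.inl rfl)
    · exact Or.inr (Or.inr (Or.inl rfl))
    · exact Or.inr (Or.inr (Or.inr (Or.inl rfl)))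
  rw [show h = ∑ a ∈ h.support, monomial a (coeff a h) from (support_sum_monomial_coeff h).symm]
  apply Subalgebra.sum_mem
  intro a ha
  rw [monomial_eq, Finsupp.prod_fintype _ _ (fun i => pow_zero _)]
  apply Subalgebra.mul_mem
  · exact Subalgebra.algebraMap_mem _ _
  rcases hcl a ha with he | ho
  · have : (∏ i, (X i : R4) ^ a i) = ∏ i, (X i ^ 2) ^ (a i / 2) := by
      apply Finset.prod_congr rfl
      intro i _
      rw [← pow_mul]
      congr 1
      obtain ⟨k, hk⟩ := he i
      omega
    rw [this]
    exact Subalgebra.prod_mem _ (fun i _ => Subalgebra.pow_mem _ (hX2 i) _)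
  · have : (∏ i, (X i : R4) ^ a i) = (∏ i, (X i ^ 2 : R4) ^ (a i / 2)) * ∏ i, (X i:R4) := by
      rw [← Finset.prod_mul_distrib]
      apply Finset.prod_congr rfl
      intro i _
      rw [← pow_mul, ← pow_succ]
      congr 1
      rcases Nat.even_or_odd (a i) with h | h
      · exact absurd h (ho i)
      · obtain ⟨k, hk⟩ := h
        omega
    rw [this]
    apply Subalgebra.mul_mem
    · exact Subalgebra.prod_mem _ (fun i _ => Subalgebra.pow_mem _ (hX2 i) _)
    · rw [Fin.prod_univ_four]
      apply Algebra.subset_adjoin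
      simp only [Set.mem_insert_iff, Set.mem_singleton_iff]
      simp


def esign (u : Fin 4 → Bool) : Fin 4 → ℂ := fun i => if u i then -1 else 1

noncomputable def wA : Fin 4 → R4 :=
  ![X 0 + X 1 + X 2 + X 3, X 0 + X 1 - X 2 - X 3, X 0 - X 1 + X 2 - X 3, X 0 - X 1 - X 2 + X 3]

noncomputable def alphaH : R4 →ₐ[ℂ] R4 := aeval wA
noncomputable def betaH : R4 →ₐ[ℂ] R4 := aeval (fun i => C (4⁻¹:ℂ) * wA i)

lemma hC4 : (C (4⁻¹:ℂ) : R4) * 4 = 1 := by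
  rw [show ((4:R4)) = C (4:ℂ) from (map_ofNat (C : ℂ →+* R4) 4).symm, ← map_mul]
  norm_num

lemma alpha_beta (g : R4) : alphaH (betaH g) = g := by
  have : alphaH.comp betaH = AlgHom.id ℂ R4 := by
    apply MvPolynomial.algHom_ext
    intro i
    fin_cases i <;> simp [alphaH, betaH, wA, algebraMap_eq]
    · linear_combination (X (0:Fin 4) : R4) * hC4
    · linear_combination (X (1:Fin 4) : R4) * hC4
    · linear_combination (X (2:Fin 4) : R4) * hC4
    · linear_combination (X (3:Fin 4) : R4) * hC4
  calc alphaH (betaH g) = (alphaH.comp betaH) g := rfl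
    _ = g := by rw [this]; rfl

lemma comm_sigma :
    (dE (esign ![false,true,false,true])).comp betaH = betaH.comp (rename ![2,3,0,1]) := by
  apply MvPolynomial.algHom_ext
  intro i
  fin_cases i <;>
    (simp [dE, betaH, wA, esign, algebraMap_eq]; try ring)

lemma comm_tau :
    (dE (esign ![false,false,true,true])).comp betaH = betaH.comp (rename ![1,0,3,2]) := by
  apply MvPolynomial.algHom_ext
  intro i
  fin_cases i <;>
    (simp [dE, betaH, wA, esign, algebraMap_eq]; try ring)

lemma comm_neg :
    (dE (esign ![true,true,true,true])).comp betaH =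
      betaH.comp (dE (esign ![true,true,true,true])) := by
  apply MvPolynomial.algHom_ext
  intro i
  fin_cases i <;>
    (simp [dE, betaH, wA, esign, algebraMap_eq]; try ring)

lemma neg_inv_of_even (g : R4) (heven : ∀ b ∈ g.support, Even (∑ i, b i)) :
    dE (esign ![true,true,true,true]) g = g := by
  apply MvPolynomial.ext
  intro m
  rw [dE_coeff]
  by_cases hm : m ∈ g.support
  · have he := heven m hm
    have : (∏ i, esign ![true,true,true,true] i ^ m i) = 1 := by
      rw [show esign ![true,true,true,true]
          = fun i => if (![true,true,true,true]) i then (-1:ℂ) else 1 from rfl]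
      rw [prod_neg_one_pow]
      rw [show (∑ i, if (![true,true,true,true]) i then m i else 0) = ∑ i, m i by
        apply Finset.sum_congr rfl; intro i _; fin_cases i <;> rfl]
      exact Even.neg_one_pow he
    rw [this, one_mul]
  · rw [MvPolynomial.notMem_support_iff.mp hm, mul_zero]

lemma core (g : R4)
    (hsym1 : rename ![2,3,0,1] g = g) (hsym2 : rename ![1,0,3,2] g = g)
    (heven : ∀ b ∈ g.support, Even (∑ i, b i)) :
    g ∈ Algebra.adjoin ℂ ({wA 0 ^ 2, wA 1 ^ 2, wA 2 ^ 2, wA 3 ^ 2,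
      wA 0 * wA 1 * wA 2 * wA 3} : Set R4) := by
  set G := betaH g with hGdef
  have hg : alphaH G = g := alpha_beta g
  have h1 : dE (esign ![false,true,false,true]) G = G := by
    rw [hGdef, show dE (esign ![false,true,false,true]) (betaH g)
        = betaH (rename ![2,3,0,1] g) from DFunLike.congr_fun comm_sigma g, hsym1]
  have h2 : dE (esign ![false,false,true,true]) G = G := by
    rw [hGdef, show dE (esign ![false,false,true,true]) (betaH g)
        = betaH (rename ![1,0,3,2] g) from DFunLike.congr_fun comm_tau g, hsym2]
  have h3 : dE (esign ![true,true,true,true]) G = G := by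
    rw [hGdef, show dE (esign ![true,true,true,true]) (betaH g)
        = betaH (dE (esign ![true,true,true,true]) g) from DFunLike.congr_fun comm_neg g,
      neg_inv_of_even g heven]
  have hp1 := parity_of_dE_inv ![false,true,false,true] G h1
  have hp2 := parity_of_dE_inv ![false,false,true,true] G h2
  have hp3 := parity_of_dE_inv ![true,true,true,true] G h3
  have hGmem : G ∈ Algebra.adjoin ℂ ({X 0 ^ 2, X 1 ^ 2, X 2 ^ 2, X 3 ^ 2,
      X 0 * X 1 * X 2 * X 3} : Set R4) := by
    apply split_mem
    intro a ha
    apply parity_dichotomy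
    · have := hp1 a ha
      simpa [Fin.sum_univ_four] using this
    · have := hp2 a ha
      simpa [Fin.sum_univ_four] using this
    · have := hp3 a ha
      simpa [Fin.sum_univ_four, ← add_assoc] using this
  have hmap : g ∈ (Algebra.adjoin ℂ ({X 0 ^ 2, X 1 ^ 2, X 2 ^ 2, X 3 ^ 2,
      X 0 * X 1 * X 2 * X 3} : Set R4)).map alphaH := ⟨G, hGmem, hg⟩
  rw [AlgHom.map_adjoin] at hmap
  refine Algebra.adjoin_mono ?_ hmap
  rintro x ⟨y, hy, rfl⟩
  simp only [Set.mem_insert_iff, Set.mem_singleton_iff] at hy ⊢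
  rcases hy with rfl | rfl | rfl | rfl | rfl <;>
    simp [alphaH, map_pow, map_mul, aeval_X]


noncomputable def psi0 : R4 →ₐ[ℂ] R4 := aeval fun i => (X i : R4) ^ 2

def hf2 (a : E4) : E4 := Finsupp.equivFunOnFinite.symm fun i => a i / 2
def db (b : E4) : E4 := Finsupp.equivFunOnFinite.symm fun i => 2 * b i
def db1 (b : E4) : E4 := Finsupp.equivFunOnFinite.symm fun i => 2 * b i + 1

@[simp] lemma hf2_apply (a : E4) (i : Fin 4) : hf2 a i = a i / 2 := rfl
@[simp] lemma db_apply (b : E4) (i : Fin 4) : db b i = 2 * b i := rfl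
@[simp] lemma db1_apply (b : E4) (i : Fin 4) : db1 b i = 2 * b i + 1 := rfl

lemma psi0_monomial (b : E4) (c : ℂ) : psi0 (monomial b c) = monomial (db b) c := by
  rw [psi0, aeval_monomial, monomial_eq, Finsupp.prod_fintype _ _ (fun i => pow_zero _),
    Finsupp.prod_fintype _ _ (fun i => pow_zero _), algebraMap_eq]
  congr 1
  apply Finset.prod_congr rfl
  intro i _
  rw [db_apply, pow_mul]

lemma Mx_eq : (X 0 * X 1 * X 2 * X 3 : R4) = monomial
    (Finsupp.single 0 1 + Finsupp.single 1 1 + Finsupp.single 2 1 + Finsupp.single 3 1) 1 := by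
  rw [show (X 0 : R4) = monomial (Finsupp.single 0 1) 1 from rfl,
    show (X 1 : R4) = monomial (Finsupp.single 1 1) 1 from rfl,
    show (X 2 : R4) = monomial (Finsupp.single 2 1) 1 from rfl,
    show (X 3 : R4) = monomial (Finsupp.single 3 1) 1 from rfl]
  simp [monomial_mul]

lemma Mx_mul_monomial (b : E4) (c : ℂ) :
    (X 0 * X 1 * X 2 * X 3 : R4) * monomial (db b) c = monomial (db1 b) c := by
  rw [Mx_eq, monomial_mul, one_mul]
  have he : (Finsupp.single 0 1 + Finsupp.single 1 1 + Finsupp.single 2 1 + Finsupp.single 3 1 : E4)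
      + db b = db1 b := by
    apply Finsupp.ext
    intro i
    simp only [Finsupp.add_apply, Finsupp.single_apply, db_apply, db1_apply]
    fin_cases i <;> simp <;> omega
  rw [he]

lemma rename_g_inv (f : R4) (π : Fin 4 → Fin 4) (hπ : Function.Involutive π)
    (hinv : ∀ b : E4, coeff (pa π b) f = coeff b f)
    (P : E4 → Prop) [DecidablePred P] (hP : ∀ a ∈ f.support, (P (pa π a) ↔ P a))
    (ρ : E4 → E4) (hρ : ∀ b, ρ (pa π b) = pa π (ρ b))
    (g : R4) (hgc : ∀ b, coeff b g = if ρ b ∈ f.support.filter P then coeff (ρ b) f else 0) :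
    rename π g = g := by
  apply MvPolynomial.ext
  intro b
  rw [coeff_rename_pa π hπ g b, hgc, hgc, hρ]
  by_cases hm : ρ b ∈ f.support.filter P
  · have h1 := (Finset.mem_filter.mp hm).1
    have h2 := (Finset.mem_filter.mp hm).2
    have hm' : pa π (ρ b) ∈ f.support.filter P := by
      refine Finset.mem_filter.mpr ⟨?_, (hP (ρ b) h1).mpr h2⟩
      rw [mem_support_iff] at h1 ⊢
      rwa [hinv (ρ b)]
    rw [if_pos hm', if_pos hm, hinv (ρ b)]
  · have hm' : pa π (ρ b) ∉ f.support.filter P := by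
      intro hc
      apply hm
      have h1 := (Finset.mem_filter.mp hc).1
      have h2 := (Finset.mem_filter.mp hc).2
      have h1' : ρ b ∈ f.support := by
        rw [mem_support_iff] at h1 ⊢
        rwa [hinv (ρ b)] at h1
      exact Finset.mem_filter.mpr ⟨h1', (hP (ρ b) h1').mp h2⟩
    rw [if_neg hm', if_neg hm]

lemma mem_of_coeffs (f : R4)
    (h13 : ∀ a ∈ f.support, Even ((a : E4) 1 + a 3))
    (h23 : ∀ a ∈ f.support, Even ((a : E4) 2 + a 3))
    (hdeg : ∀ a ∈ f.support, ((a : E4) 0 + a 1 + a 2 + a 3) % 4 = 0)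
    (hsig : ∀ b : E4, coeff (pa ![2,3,0,1] b) f = coeff b f)
    (htau : ∀ b : E4, coeff (pa ![1,0,3,2] b) f = coeff b f) :
    f ∈ Algebra.adjoin ℂ ({p0, p1, p2, p3, p4} : Set (MvPolynomial (Fin 4) ℂ)) := by
  classical
  have hall : ∀ a ∈ f.support, (∀ i, Even ((a:E4) i)) ∨ (∀ i, ¬ Even ((a:E4) i)) := by
    intro a ha
    exact parity_dichotomy a (h13 a ha) (h23 a ha) (by
      have := hdeg a ha
      rw [Nat.even_iff]
      omega)
  -- memberships of the five generators and auxiliary elements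
  set A := Algebra.adjoin ℂ ({p0, p1, p2, p3, p4} : Set (MvPolynomial (Fin 4) ℂ)) with hA
  have hp0 : p0 ∈ A := Algebra.subset_adjoin (by simp)
  have hp1 : p1 ∈ A := Algebra.subset_adjoin (by simp)
  have hp2 : p2 ∈ A := Algebra.subset_adjoin (by simp)
  have hp3 : p3 ∈ A := Algebra.subset_adjoin (by simp)
  have hp4 : p4 ∈ A := Algebra.subset_adjoin (by simp)
  have hMx : (X 0 * X 1 * X 2 * X 3 : R4) ∈ A := by
    have he : (X 0 * X 1 * X 2 * X 3 : R4) = C (4⁻¹:ℂ) * p4 := by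
      rw [p4]
      linear_combination (-(X (0:Fin 4) * X 1 * X 2 * X 3 : R4)) * hC4
    rw [he]
    exact Subalgebra.mul_mem _ (Subalgebra.algebraMap_mem _ _) hp4
  have hpsiW : ∀ q ∈ ({wA 0 ^ 2, wA 1 ^ 2, wA 2 ^ 2, wA 3 ^ 2,
      wA 0 * wA 1 * wA 2 * wA 3} : Set R4), psi0 q ∈ A := by
    intro q hq
    simp only [Set.mem_insert_iff, Set.mem_singleton_iff] at hq
    rcases hq with rfl | rfl | rfl | rfl | rfl
    · have : psi0 (wA 0 ^ 2) = p0 + p1 + p2 + p3 := by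
        simp [psi0, wA, p0, p1, p2, p3]
        ring
      rw [this]
      exact add_mem (add_mem (add_mem hp0 hp1) hp2) hp3
    · have : psi0 (wA 1 ^ 2) = p0 + p1 - p2 - p3 := by
        simp [psi0, wA, p0, p1, p2, p3]
        ring
      rw [this]
      exact sub_mem (sub_mem (add_mem hp0 hp1) hp2) hp3
    · have : psi0 (wA 2 ^ 2) = p0 - p1 + p2 - p3 := by
        simp [psi0, wA, p0, p1, p2, p3]
        ring
      rw [this]
      exact sub_mem (add_mem (sub_mem hp0 hp1) hp2) hp3
    · have : psi0 (wA 3 ^ 2) = p0 - p1 - p2 + p3 := by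
        simp [psi0, wA, p0, p1, p2, p3]
        ring
      rw [this]
      exact add_mem (sub_mem (sub_mem hp0 hp1) hp2) hp3
    · have : psi0 (wA 0 * wA 1 * wA 2 * wA 3)
          = 2 * p4 ^ 2 + p0 ^ 2 - p1 ^ 2 - p2 ^ 2 - p3 ^ 2 := by
        simp [psi0, wA, p0, p1, p2, p3, p4]
        ring
      rw [this]
      have h2A : (2 : R4) ∈ A := by
        rw [show (2:R4) = C (2:ℂ) from (map_ofNat (C : ℂ →+* R4) 2).symm, ← algebraMap_eq]
        exact Subalgebra.algebraMap_mem _ _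
      exact sub_mem (sub_mem (sub_mem (add_mem (mul_mem h2A (pow_mem hp4 2)) (pow_mem hp0 2))
        (pow_mem hp1 2)) (pow_mem hp2 2)) (pow_mem hp3 2)
  -- the even/odd parts
  have hS0even : ∀ a ∈ f.support.filter (fun a : E4 => Even (a 0)), ∀ i, Even ((a:E4) i) := by
    intro a ha i
    rcases hall a (Finset.mem_filter.mp ha).1 with h | h
    · exact h i
    · exact absurd (Finset.mem_filter.mp ha).2 (h 0)
  have hS1odd : ∀ a ∈ f.support.filter (fun a : E4 => ¬ Even (a 0)), ∀ i, ¬ Even ((a:E4) i) := by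
    intro a ha i
    rcases hall a (Finset.mem_filter.mp ha).1 with h | h
    · exact absurd (h 0) (Finset.mem_filter.mp ha).2
    · exact h i
  have hc0 : ∀ b, coeff b (∑ a ∈ f.support.filter (fun a : E4 => Even (a 0)),
      monomial (hf2 a) (coeff a f))
      = if db b ∈ f.support.filter (fun a : E4 => Even (a 0)) then coeff (db b) f else 0 := by
    intro b
    apply coeff_sum_mono_reindex _ hf2 db
    · intro a ha
      apply Finsupp.ext
      intro i
      simp only [db_apply, hf2_apply]
      obtain ⟨k, hk⟩ := hS0even a ha i
      omega
    · intro b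
      apply Finsupp.ext
      intro i
      simp only [db_apply, hf2_apply]
      omega
  have hc1 : ∀ b, coeff b (∑ a ∈ f.support.filter (fun a : E4 => ¬ Even (a 0)),
      monomial (hf2 a) (coeff a f))
      = if db1 b ∈ f.support.filter (fun a : E4 => ¬ Even (a 0)) then coeff (db1 b) f else 0 := by
    intro b
    apply coeff_sum_mono_reindex _ hf2 db1
    · intro a ha
      apply Finsupp.ext
      intro i
      simp only [db1_apply, hf2_apply]
      have := hS1odd a ha i
      rw [Nat.not_even_iff] at this
      omega
    · intro b
      apply Finsupp.ext
      intro i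
      simp only [db1_apply, hf2_apply]
      omega
  have hrec0 : psi0 (∑ a ∈ f.support.filter (fun a : E4 => Even (a 0)),
      monomial (hf2 a) (coeff a f))
      = ∑ a ∈ f.support.filter (fun a : E4 => Even (a 0)), monomial a (coeff a f) := by
    rw [map_sum]
    apply Finset.sum_congr rfl
    intro a ha
    rw [psi0_monomial]
    have hda : db (hf2 a) = a := by
      apply Finsupp.ext
      intro i
      simp only [db_apply, hf2_apply]
      obtain ⟨k, hk⟩ := hS0even a ha i
      omega
    rw [hda]
  have hrec1 : (X 0 * X 1 * X 2 * X 3 : R4) * psi0 (∑ a ∈ f.support.filter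
        (fun a : E4 => ¬ Even (a 0)), monomial (hf2 a) (coeff a f))
      = ∑ a ∈ f.support.filter (fun a : E4 => ¬ Even (a 0)), monomial a (coeff a f) := by
    rw [map_sum, Finset.mul_sum]
    apply Finset.sum_congr rfl
    intro a ha
    rw [psi0_monomial, Mx_mul_monomial]
    have hda : db1 (hf2 a) = a := by
      apply Finsupp.ext
      intro i
      simp only [db1_apply, hf2_apply]
      have := hS1odd a ha i
      rw [Nat.not_even_iff] at this
      omega
    rw [hda]
  have hsplitf : f = psi0 (∑ a ∈ f.support.filter (fun a : E4 => Even (a 0)),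
        monomial (hf2 a) (coeff a f))
      + (X 0 * X 1 * X 2 * X 3 : R4) * psi0 (∑ a ∈ f.support.filter
        (fun a : E4 => ¬ Even (a 0)), monomial (hf2 a) (coeff a f)) := by
    rw [hrec0, hrec1, Finset.sum_filter_add_sum_filter_not, support_sum_monomial_coeff]
  -- parity-class transfer along permutations
  have hPgen : ∀ (π : Fin 4 → Fin 4), (∀ b : E4, coeff (pa π b) f = coeff b f) →
      ∀ a ∈ f.support, (Even ((pa π a) 0) ↔ Even ((a:E4) 0)) := by
    intro π hinv a ha
    rcases hall a ha with h | h
    · exact iff_of_true (h (π 0)) (h 0)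
    · exact iff_of_false (h (π 0)) (h 0)
  have hinvs : Function.Involutive (![2,3,0,1] : Fin 4 → Fin 4) := by
    intro i; fin_cases i <;> rfl
  have hinvt : Function.Involutive (![1,0,3,2] : Fin 4 → Fin 4) := by
    intro i; fin_cases i <;> rfl
  have hρ0 : ∀ (π : Fin 4 → Fin 4) (b : E4), db (pa π b) = pa π (db b) := fun _ _ => rfl
  have hρ1 : ∀ (π : Fin 4 → Fin 4) (b : E4), db1 (pa π b) = pa π (db1 b) := fun _ _ => rfl
  have hg0sym1 := rename_g_inv f _ hinvs hsig (fun a : E4 => Even (a 0))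
    (fun a ha => hPgen _ hsig a ha) db (hρ0 _) _ hc0
  have hg0sym2 := rename_g_inv f _ hinvt htau (fun a : E4 => Even (a 0))
    (fun a ha => hPgen _ htau a ha) db (hρ0 _) _ hc0
  have hg1sym1 := rename_g_inv f _ hinvs hsig (fun a : E4 => ¬ Even (a 0))
    (fun a ha => not_congr (hPgen _ hsig a ha)) db1 (hρ1 _) _ hc1
  have hg1sym2 := rename_g_inv f _ hinvt htau (fun a : E4 => ¬ Even (a 0))
    (fun a ha => not_congr (hPgen _ htau a ha)) db1 (hρ1 _) _ hc1
  have hev0 : ∀ b ∈ (∑ a ∈ f.support.filter (fun a : E4 => Even (a 0)),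
      monomial (hf2 a) (coeff a f)).support, Even (∑ i, (b:E4) i) := by
    intro b hb
    have hcb := MvPolynomial.mem_support_iff.mp hb
    rw [hc0 b] at hcb
    by_cases hdb : db b ∈ f.support.filter (fun a : E4 => Even (a 0))
    · have hd := hdeg (db b) (Finset.mem_filter.mp hdb).1
      simp only [db_apply] at hd
      rw [Fin.sum_univ_four, Nat.even_iff]
      omega
    · rw [if_neg hdb] at hcb
      exact absurd rfl hcb
  have hev1 : ∀ b ∈ (∑ a ∈ f.support.filter (fun a : E4 => ¬ Even (a 0)),
      monomial (hf2 a) (coeff a f)).support, Even (∑ i, (b:E4) i) := by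
    intro b hb
    have hcb := MvPolynomial.mem_support_iff.mp hb
    rw [hc1 b] at hcb
    by_cases hdb : db1 b ∈ f.support.filter (fun a : E4 => ¬ Even (a 0))
    · have hd := hdeg (db1 b) (Finset.mem_filter.mp hdb).1
      simp only [db1_apply] at hd
      rw [Fin.sum_univ_four, Nat.even_iff]
      omega
    · rw [if_neg hdb] at hcb
      exact absurd rfl hcb
  have hmem0 : psi0 (∑ a ∈ f.support.filter (fun a : E4 => Even (a 0)),
      monomial (hf2 a) (coeff a f)) ∈ A := by
    have hcore := core _ hg0sym1 hg0sym2 hev0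
    have hmap : psi0 (∑ a ∈ f.support.filter (fun a : E4 => Even (a 0)),
        monomial (hf2 a) (coeff a f)) ∈ (Algebra.adjoin ℂ ({wA 0 ^ 2, wA 1 ^ 2, wA 2 ^ 2,
        wA 3 ^ 2, wA 0 * wA 1 * wA 2 * wA 3} : Set R4)).map psi0 := ⟨_, hcore, rfl⟩
    rw [AlgHom.map_adjoin] at hmap
    refine Algebra.adjoin_le ?_ hmap
    rintro x ⟨y, hy, rfl⟩
    exact hpsiW y hy
  have hmem1 : psi0 (∑ a ∈ f.support.filter (fun a : E4 => ¬ Even (a 0)),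
      monomial (hf2 a) (coeff a f)) ∈ A := by
    have hcore := core _ hg1sym1 hg1sym2 hev1
    have hmap : psi0 (∑ a ∈ f.support.filter (fun a : E4 => ¬ Even (a 0)),
        monomial (hf2 a) (coeff a f)) ∈ (Algebra.adjoin ℂ ({wA 0 ^ 2, wA 1 ^ 2, wA 2 ^ 2,
        wA 3 ^ 2, wA 0 * wA 1 * wA 2 * wA 3} : Set R4)).map psi0 := ⟨_, hcore, rfl⟩
    rw [AlgHom.map_adjoin] at hmap
    refine Algebra.adjoin_le ?_ hmap
    rintro x ⟨y, hy, rfl⟩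
    exact hpsiW y hy
  rw [hsplitf]
  exact add_mem hmem0 (mul_mem hMx hmem1)

lemma invol_s : Function.Involutive (![2,3,0,1] : Fin 4 → Fin 4) := by
  intro i; fin_cases i <;> rfl

lemma invol_t : Function.Involutive (![1,0,3,2] : Fin 4 → Fin 4) := by
  intro i; fin_cases i <;> rfl

lemma h0001_eq : h0001 = dE (esign ![false,true,false,true]) := by
  rw [h0001, dE]
  congr 1
  funext i
  fin_cases i <;> simp [esign]

lemma h0010_eq : h0010 = dE (esign ![false,false,true,true]) := by
  rw [h0010, dE]
  congr 1
  funext i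
  fin_cases i <;> simp [esign]

lemma cmap_eq : cmap = dE (fun _ => Complex.I) := by
  rw [cmap, dE]
  congr 1
  funext i
  fin_cases i <;> simp

lemma h1000_eq : h1000 = rename (![2,3,0,1] : Fin 4 → Fin 4) := by
  rw [h1000]
  rw [rename_eq_aeval]
  congr 1
  funext i
  fin_cases i <;> rfl

lemma h0100_eq : h0100 = rename (![1,0,3,2] : Fin 4 → Fin 4) := by
  rw [h0100]
  rw [rename_eq_aeval]
  congr 1
  funext i
  fin_cases i <;> rfl

lemma hC_I4 : ((C Complex.I : R4)) ^ 4 = 1 := by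
  rw [← map_pow, Complex.I_pow_four, map_one]

lemma gen_inv_sign : ∀ q ∈ ({p0,p1,p2,p3,p4} : Set R4),
    h0001 q = q ∧ h0010 q = q ∧ h0100 q = q ∧ h1000 q = q := by
  intro q hq
  simp only [Set.mem_insert_iff, Set.mem_singleton_iff] at hq
  rcases hq with rfl | rfl | rfl | rfl | rfl <;>
    refine ⟨?_, ?_, ?_, ?_⟩ <;>
      · simp [h0001, h0010, h0100, h1000, p0, p1, p2, p3, p4, map_ofNat]
        try ring

lemma cmap_p0 : cmap p0 = p0 := by
  simp [cmap, p0, map_ofNat]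
  ring_nf
  simp only [hC_I4]
  ring

lemma cmap_p1 : cmap p1 = p1 := by
  simp [cmap, p1, map_ofNat]
  ring_nf
  simp only [hC_I4]
  ring

lemma cmap_p2 : cmap p2 = p2 := by
  simp [cmap, p2, map_ofNat]
  ring_nf
  simp only [hC_I4]
  ring

lemma cmap_p3 : cmap p3 = p3 := by
  simp [cmap, p3, map_ofNat]
  ring_nf
  simp only [hC_I4]
  ring

lemma cmap_p4 : cmap p4 = p4 := by
  simp [cmap, p4, map_ofNat]
  ring_nf
  simp only [hC_I4]
  ring

lemma gen_inv : ∀ q ∈ ({p0,p1,p2,p3,p4} : Set R4),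
    h0001 q = q ∧ h0010 q = q ∧ h0100 q = q ∧ h1000 q = q ∧ cmap q = q := by
  intro q hq
  have hsgn := gen_inv_sign q hq
  refine ⟨hsgn.1, hsgn.2.1, hsgn.2.2.1, hsgn.2.2.2, ?_⟩
  simp only [Set.mem_insert_iff, Set.mem_singleton_iff] at hq
  rcases hq with rfl | rfl | rfl | rfl | rfl
  exacts [cmap_p0, cmap_p1, cmap_p2, cmap_p3, cmap_p4]


/-- A polynomial `f ∈ ℂ[x₀,x₁,x₂,x₃]` is invariant under the five substitutions
`h₀₀₀₁, h₀₀₁₀, h₀₁₀₀, h₁₀₀₀, c` (which generate the image of the Heisenberg group under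
the Schrödinger representation) if and only if `f` lies in the `ℂ`-subalgebra generated
by `p₀, p₁, p₂, p₃, p₄`. -/
theorem heisenberg_invariants (f : MvPolynomial (Fin 4) ℂ) :
    (h0001 f = f ∧ h0010 f = f ∧ h0100 f = f ∧ h1000 f = f ∧ cmap f = f) ↔
      f ∈ Algebra.adjoin ℂ ({p0, p1, p2, p3, p4} : Set (MvPolynomial (Fin 4) ℂ)) := by
  constructor
  · rintro ⟨hs1, hs2, hs3, hs4, hs5⟩
    apply mem_of_coeffs f
    · intro a ha
      have := parity_of_dE_inv ![false,true,false,true] f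
        (by show dE (esign ![false,true,false,true]) f = f; rw [← h0001_eq]; exact hs1) a ha
      simpa [Fin.sum_univ_four] using this
    · intro a ha
      have := parity_of_dE_inv ![false,false,true,true] f
        (by show dE (esign ![false,false,true,true]) f = f; rw [← h0010_eq]; exact hs2) a ha
      simpa [Fin.sum_univ_four] using this
    · intro a ha
      have hc := MvPolynomial.mem_support_iff.mp ha
      have h1 : (∏ i, Complex.I ^ a i) * coeff a f = coeff a f := by
        rw [← dE_coeff (fun _ => Complex.I) f a, ← cmap_eq, hs5]
      have h3 := mul_right_cancel₀ hc (h1.trans (one_mul _).symm)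
      rw [Finset.prod_pow_eq_pow_sum, Fin.sum_univ_four] at h3
      exact I_pow_eq_one h3
    · intro b
      rw [← coeff_rename_pa _ invol_s f b, ← h1000_eq, hs4]
    · intro b
      rw [← coeff_rename_pa _ invol_t f b, ← h0100_eq, hs3]
  · intro hf
    have key : ∀ (h : R4 →ₐ[ℂ] R4), (∀ q ∈ ({p0,p1,p2,p3,p4} : Set R4), h q = q) →
        h f = f := by
      intro h hgen
      refine Algebra.adjoin_induction (fun x hx => hgen x hx) (fun r => h.commutes r)
        (fun x y _ _ hx hy => by rw [map_add, hx, hy])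
        (fun x y _ _ hx hy => by rw [map_mul, hx, hy]) hf
    exact ⟨key h0001 (fun q hq => (gen_inv q hq).1),
      key h0010 (fun q hq => (gen_inv q hq).2.1),
      key h0100 (fun q hq => (gen_inv q hq).2.2.1),
      key h1000 (fun q hq => (gen_inv q hq).2.2.2.1),
      key cmap (fun q hq => (gen_inv q hq).2.2.2.2)⟩

end HeisAux
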